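/- For every a > 0 and every t with 0 ≤ t ≤ a, one has Δ(t) ≥ (Δ(a)/a²)·t², where Δ(t) = t − log(1 + t). -/

import Mathlib

/-- Δ(t) = t − log(1+t). -/
noncomputable def Delta (t : ℝ) : ℝ := t - Real.log (1 + t)

lemma delta_integral_rep (x : ℝ) (hx : 0 < x) :
    ∫ u in (0:ℝ)..1, u / (1 + x * u) = Delta x / x ^ 2 := by
  have key : ∀ u ∈ Set.uIcc (0:ℝ) 1,
      HasDerivAt (fun u => u / x - Real.log (1 + x * u) / x ^ 2) (u / (1 + x * u)) u := by
    intro u hu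
    rw [Set.uIcc_of_le (by norm_num)] at hu
    have hpos : 0 < 1 + x * u := by nlinarith [hu.1]
    have h1 : HasDerivAt (fun u : ℝ => 1 + x * u) x u := by
      simpa using ((hasDerivAt_id u).const_mul x).const_add 1
    have h2 : HasDerivAt (fun u : ℝ => Real.log (1 + x * u)) (x / (1 + x * u)) u :=
      h1.log (ne_of_gt hpos)
    have h3 : HasDerivAt (fun u : ℝ => u / x - Real.log (1 + x * u) / x ^ 2)
        (1 / x - (x / (1 + x * u)) / x ^ 2) u :=
      ((hasDerivAt_id u).div_const x).sub (h2.div_const (x ^ 2))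
    convert h3 using 1
    field_simp
    have hne : 1 + u * x ≠ 0 := by rw [mul_comm]; exact hpos.ne'
    field_simp
    ring
  have hcont : IntervalIntegrable (fun u => u / (1 + x * u)) MeasureTheory.volume 0 1 := by
    apply ContinuousOn.intervalIntegrable
    apply ContinuousOn.div continuousOn_id
    · fun_prop
    · intro u hu
      rw [Set.uIcc_of_le (by norm_num)] at hu
      nlinarith [hu.1]
  rw [intervalIntegral.integral_eq_sub_of_hasDerivAt key hcont]
  simp only [Delta]
  have hx' : x ≠ 0 := ne_of_gt hx
  field_simp
  simp

theorem delta_quadratic_lower_interval (a t : ℝ) (ha : 0 < a) (ht0 : 0 ≤ t) (hta : t ≤ a) :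
    Delta t ≥ (Delta a / a ^ 2) * t ^ 2 := by
  rcases eq_or_lt_of_le ht0 with h0 | ht
  · simp [Delta, ← h0]
  have intt := delta_integral_rep t ht
  have inta := delta_integral_rep a ha
  have hmono : (∫ u in (0:ℝ)..1, u / (1 + a * u)) ≤ ∫ u in (0:ℝ)..1, u / (1 + t * u) := by
    apply intervalIntegral.integral_mono_on (by norm_num)
    · apply ContinuousOn.intervalIntegrable
      apply ContinuousOn.div continuousOn_id
      · fun_prop
      · intro u hu
        rw [Set.uIcc_of_le (by norm_num)] at hu
        nlinarith [hu.1]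
    · apply ContinuousOn.intervalIntegrable
      apply ContinuousOn.div continuousOn_id
      · fun_prop
      · intro u hu
        rw [Set.uIcc_of_le (by norm_num)] at hu
        nlinarith [hu.1]
    · intro u hu
      have h1 : 0 < 1 + t * u := by nlinarith [hu.1]
      have h2 : 0 < 1 + a * u := by nlinarith [hu.1]
      gcongr
      · exact hu.1
      · nlinarith [hu.1]
  have h : Delta a / a ^ 2 ≤ Delta t / t ^ 2 := by rw [← inta, ← intt]; exact hmono
  have := mul_le_mul_of_nonneg_right h (sq_nonneg t)
  rwa [div_mul_cancel₀ _ (by positivity : (t:ℝ) ^ 2 ≠ 0)] at this
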